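/- Let 0 < w1 < w2 be integers. Every four-point multiset in ℤ² with multi-width (w1, w2) admitting a dual vector u1 with width_{u1}(S) = w1 and u1·S affine equivalent to {0,0,0,w1} is affine equivalent to a multiset of the form {(0,0), (0,y0), (0,w2), (w1,y1)}, and every such listed multiset (with 0 ≤ y0 ≤ w2/2, 0 ≤ y1 < w1) has multi-width exactly (w1, w2); in particular every dual vector u = (a, b) ∈ (ℤ²)* with b ≠ 0 satisfies width_u({(0,0), (0,y0), (0,w2), (w1,y1)}) ≥ w2. -/

import Mathlib

open scoped Pointwise

noncomputable section

/-- Embed an integer lattice point into real space. -/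
def intEmbed {d : ℕ} (v : Fin d → ℤ) : Fin d → ℝ := fun i => (v i : ℝ)

/-- Pairing of an integer dual vector with a real point. -/
def dualPair {d : ℕ} (u : Fin d → ℤ) (x : Fin d → ℝ) : ℝ := ∑ i, (u i : ℝ) * x i

/-- The width of a set `P ⊆ ℝ^d` with respect to an integer dual vector `u`:
`max_{x ∈ P} u·x − min_{x ∈ P} u·x`. -/
def widthIn {d : ℕ} (u : Fin d → ℤ) (P : Set (Fin d → ℝ)) : ℝ :=
  sSup (dualPair u '' P) - sInf (dualPair u '' P)

/-- `w` is a tuple of widths of `P` realized by linearly independent dual vectors. -/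
def IsWidthTuple {d : ℕ} (P : Set (Fin d → ℝ)) (w : Fin d → ℝ) : Prop :=
  ∃ u : Fin d → (Fin d → ℤ), LinearIndependent ℤ u ∧ ∀ i, widthIn (u i) P = w i

/-- `w` is the multi-width of `P`: the lexicographically minimal width tuple over
linearly independent tuples of dual vectors. -/
def IsMultiWidth {d : ℕ} (P : Set (Fin d → ℝ)) (w : Fin d → ℝ) : Prop :=
  IsWidthTuple P w ∧ ∀ w' : Fin d → ℝ, IsWidthTuple P w' → toLex w ≤ toLex w'

/-- The affine map `x ↦ A x + b` on real points, with integral `A` and `b`. -/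
def unimodMap {d : ℕ} (A : Matrix (Fin d) (Fin d) ℤ) (b : Fin d → ℤ) (x : Fin d → ℝ) :
    Fin d → ℝ :=
  fun i => (∑ j, (A i j : ℝ) * x j) + (b i : ℝ)

/-- Affine unimodular equivalence of subsets of `ℝ^d`: `Q = A·P + b` with `A ∈ GL_d(ℤ)`,
`b ∈ ℤ^d`. -/
def AffEquiv {d : ℕ} (P Q : Set (Fin d → ℝ)) : Prop :=
  ∃ A : Matrix (Fin d) (Fin d) ℤ, IsUnit A.det ∧ ∃ b : Fin d → ℤ, Q = unimodMap A b '' P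

/-- A lattice polytope: the convex hull of finitely many lattice points. -/
def IsLatticePolytope {d : ℕ} (P : Set (Fin d → ℝ)) : Prop :=
  ∃ V : Finset (Fin d → ℤ), V.Nonempty ∧ P = convexHull ℝ (intEmbed '' (V : Set (Fin d → ℤ)))

/-- A lattice tetrahedron: the convex hull of 4 affinely independent lattice points in `ℝ³`. -/
def IsLatticeTetrahedron (P : Set (Fin 3 → ℝ)) : Prop :=
  ∃ v : Fin 4 → (Fin 3 → ℤ), AffineIndependent ℝ (fun i => intEmbed (v i)) ∧
    P = convexHull ℝ (Set.range fun i => intEmbed (v i))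

/-- The type of affine equivalence classes of lattice tetrahedra with multi-width `w`. -/
def TetClasses (w : Fin 3 → ℝ) : Type :=
  Quot fun P Q : {P : Set (Fin 3 → ℝ) // IsLatticeTetrahedron P ∧ IsMultiWidth P w} =>
    AffEquiv P.1 Q.1

/-- The real points of a multiset of lattice points. -/
def msetPts {d : ℕ} (S : Multiset (Fin d → ℤ)) : Set (Fin d → ℝ) :=
  intEmbed '' {v | v ∈ S}

/-- The convex hull of a multiset of lattice points. -/
def msetHull {d : ℕ} (S : Multiset (Fin d → ℤ)) : Set (Fin d → ℝ) :=
  convexHull ℝ (msetPts S)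

/-- Affine unimodular equivalence of multisets of lattice points. -/
def MsetEquiv {d : ℕ} (S T : Multiset (Fin d → ℤ)) : Prop :=
  ∃ A : Matrix (Fin d) (Fin d) ℤ, IsUnit A.det ∧ ∃ b : Fin d → ℤ,
    S.map (fun v => A.mulVec v + b) = T

/-- Affine unimodular equivalence of multisets of integers (`d = 1`). -/
def MsetEquivZ (S T : Multiset ℤ) : Prop :=
  ∃ a : ℤ, IsUnit a ∧ ∃ b : ℤ, S.map (fun x => a * x + b) = T

/-- The width of a multiset of integers (the width of its convex hull). -/
def widthZ (S : Multiset ℤ) : ℝ :=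
  sSup ((fun n : ℤ => (n : ℝ)) '' {n | n ∈ S}) - sInf ((fun n : ℤ => (n : ℝ)) '' {n | n ∈ S})

/-- `S` has a dual vector `u` of width `w1` whose image multiset `u·S` is affine
equivalent in `ℤ` to the multiset `L`. -/
def HasLineType (w1 : ℤ) (L : Multiset ℤ) (S : Multiset (Fin 2 → ℤ)) : Prop :=
  ∃ u : Fin 2 → ℤ, widthIn u (msetHull S) = (w1 : ℝ) ∧
    MsetEquivZ (S.map fun v => ∑ i, u i * v i) L

-- lex helpers
section LexH
variable (x y : Fin 2 → ℝ)

theorem lex_lt_of_fst (h : x 0 < y 0) : toLex x < toLex y :=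
  ⟨0, fun j hj => absurd hj (by simp [Fin.lt_def]), h⟩

theorem lex_lt_of_snd (h0 : x 0 = y 0) (h : x 1 < y 1) : toLex x < toLex y :=
  ⟨1, fun j hj => by
    have : j = 0 := by omega
    simpa [this] using h0, h⟩

theorem lex_le_of_fst (h : x 0 < y 0) : toLex x ≤ toLex y := le_of_lt (lex_lt_of_fst x y h)

theorem lex_le_of_snd (h0 : x 0 = y 0) (h : x 1 ≤ y 1) : toLex x ≤ toLex y := by
  rcases eq_or_lt_of_le h with h1 | h1
  · have : x = y := by funext i; fin_cases i <;> assumption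
    exact le_of_eq (congrArg toLex this)
  · exact le_of_lt (lex_lt_of_snd x y h0 h1)

theorem fst_le_of_lex_le (h : toLex x ≤ toLex y) : x 0 ≤ y 0 := by
  by_contra hc
  push_neg at hc
  exact absurd h (not_le_of_gt (lex_lt_of_fst y x hc))

theorem snd_le_of_lex_le (h : toLex x ≤ toLex y) (h0 : x 0 = y 0) : x 1 ≤ y 1 := by
  by_contra hc
  push_neg at hc
  exact absurd h (not_le_of_gt (lex_lt_of_snd y x h0.symm hc))

end LexH

def ip (u v : Fin 2 → ℤ) : ℤ := u 0 * v 0 + u 1 * v 1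

theorem isLinearMap_dualPair {d : ℕ} (u : Fin d → ℤ) : IsLinearMap ℝ (dualPair u) := by
  constructor
  · intro x y
    simp [dualPair, mul_add, Finset.sum_add_distrib]
  · intro c x
    simp [dualPair, Finset.mul_sum]
    congr 1; funext i; ring

theorem isGreatest_hull {d : ℕ} (u : Fin d → ℤ) (s : Set (Fin d → ℝ)) (M : ℝ)
    (h : IsGreatest (dualPair u '' s) M) :
    IsGreatest (dualPair u '' convexHull ℝ s) M := by
  constructor
  · exact Set.image_mono (subset_convexHull ℝ s) h.1
  · rintro y ⟨x, hx, rfl⟩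
    have hsub : convexHull ℝ s ⊆ {x | dualPair u x ≤ M} := by
      apply convexHull_min _ (convex_halfSpace_le (isLinearMap_dualPair u) M)
      intro z hz
      exact h.2 ⟨z, hz, rfl⟩
    exact hsub hx

theorem isLeast_hull {d : ℕ} (u : Fin d → ℤ) (s : Set (Fin d → ℝ)) (m : ℝ)
    (h : IsLeast (dualPair u '' s) m) :
    IsLeast (dualPair u '' convexHull ℝ s) m := by
  constructor
  · exact Set.image_mono (subset_convexHull ℝ s) h.1
  · rintro y ⟨x, hx, rfl⟩
    have hsub : convexHull ℝ s ⊆ {x | m ≤ dualPair u x} := by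
      apply convexHull_min _ (convex_halfSpace_ge (isLinearMap_dualPair u) m)
      intro z hz
      exact h.2 ⟨z, hz, rfl⟩
    exact hsub hx

theorem dualPair_intEmbed (u v : Fin 2 → ℤ) : dualPair u (intEmbed v) = (ip u v : ℝ) := by
  simp only [dualPair, intEmbed, ip, Fin.sum_univ_two]
  push_cast; ring

theorem msetPts_four (p1 p2 p3 p4 : Fin 2 → ℤ) :
    msetPts ({p1, p2, p3, p4} : Multiset (Fin 2 → ℤ)) =
      {intEmbed p1, intEmbed p2, intEmbed p3, intEmbed p4} := by
  unfold msetPts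
  have : {v | v ∈ ({p1, p2, p3, p4} : Multiset (Fin 2 → ℤ))} = {p1, p2, p3, p4} := by
    ext v; simp
  rw [this]
  simp [Set.image_insert_eq]

theorem isGreatest_four (a b c d : ℝ) :
    IsGreatest ({a, b, c, d} : Set ℝ) (max (max a b) (max c d)) := by
  constructor
  · rcases max_choice (max a b) (max c d) with h1 | h1 <;> rw [h1] <;>
      [rcases max_choice a b with h2 | h2; rcases max_choice c d with h2 | h2] <;> rw [h2] <;> simp
  · rintro y hy
    simp only [Set.mem_insert_iff, Set.mem_singleton_iff] at hy
    rcases hy with rfl | rfl | rfl | rfl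
    · exact le_max_of_le_left (le_max_left _ _)
    · exact le_max_of_le_left (le_max_right _ _)
    · exact le_max_of_le_right (le_max_left _ _)
    · exact le_max_of_le_right (le_max_right _ _)

theorem isLeast_four (a b c d : ℝ) :
    IsLeast ({a, b, c, d} : Set ℝ) (min (min a b) (min c d)) := by
  constructor
  · rcases min_choice (min a b) (min c d) with h1 | h1 <;> rw [h1] <;>
      [rcases min_choice a b with h2 | h2; rcases min_choice c d with h2 | h2] <;> rw [h2] <;> simp
  · rintro y hy
    simp only [Set.mem_insert_iff, Set.mem_singleton_iff] at hy
    rcases hy with rfl | rfl | rfl | rfl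
    · exact min_le_of_left_le (min_le_left _ _)
    · exact min_le_of_left_le (min_le_right _ _)
    · exact min_le_of_right_le (min_le_left _ _)
    · exact min_le_of_right_le (min_le_right _ _)

/-- The fundamental width formula for four-point multisets. -/

theorem widthIn_four (u p1 p2 p3 p4 : Fin 2 → ℤ) :
    widthIn u (msetHull ({p1, p2, p3, p4} : Multiset (Fin 2 → ℤ))) =
      ((max (max (ip u p1) (ip u p2)) (max (ip u p3) (ip u p4))
        - min (min (ip u p1) (ip u p2)) (min (ip u p3) (ip u p4)) : ℤ) : ℝ) := by
  unfold widthIn msetHull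
  rw [msetPts_four]
  have himg : dualPair u '' ({intEmbed p1, intEmbed p2, intEmbed p3, intEmbed p4} :
      Set (Fin 2 → ℝ)) = {(ip u p1 : ℝ), (ip u p2 : ℝ), (ip u p3 : ℝ), (ip u p4 : ℝ)} := by
    simp [Set.image_insert_eq, dualPair_intEmbed]
  have hG := isGreatest_hull u _ _ (himg ▸ isGreatest_four (ip u p1 : ℝ) (ip u p2 : ℝ) (ip u p3 : ℝ) (ip u p4 : ℝ))
  have hL := isLeast_hull u _ _ (himg ▸ isLeast_four (ip u p1 : ℝ) (ip u p2 : ℝ) (ip u p3 : ℝ) (ip u p4 : ℝ))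
  rw [hG.csSup_eq, hL.csInf_eq]
  push_cast
  ring

def det2 (u v : Fin 2 → ℤ) : ℤ := u 0 * v 1 - u 1 * v 0

theorem eta_fin2 {M : Type*} (u : Fin 2 → M) : u = ![u 0, u 1] := by
  funext i; fin_cases i <;> rfl

theorem li_iff (u : Fin 2 → (Fin 2 → ℤ)) :
    LinearIndependent ℤ u ↔ det2 (u 0) (u 1) ≠ 0 := by
  rw [show u = ![u 0, u 1] from eta_fin2 u, LinearIndependent.pair_iff]
  simp only [Matrix.cons_val_zero, Matrix.cons_val_one, Matrix.head_cons]
  constructor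
  · intro h hdet
    unfold det2 at hdet
    have h1 := h (u 1 1) (-(u 0 1)) (by
      funext i
      simp only [Pi.add_apply, Pi.smul_apply, smul_eq_mul, Pi.neg_apply, Pi.zero_apply, neg_mul]
      fin_cases i
      · simp only [Fin.zero_eta]; linear_combination hdet
      · simp only [Fin.mk_one]; ring)
    have h2 := h (u 1 0) (-(u 0 0)) (by
      funext i
      simp only [Pi.add_apply, Pi.smul_apply, smul_eq_mul, Pi.neg_apply, Pi.zero_apply, neg_mul]
      fin_cases i
      · simp only [Fin.zero_eta]; ring
      · simp only [Fin.mk_one]; linear_combination -hdet)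
    have h3 := h 1 0 (by
      funext i
      simp only [Pi.add_apply, Pi.smul_apply, smul_eq_mul, Pi.zero_apply, one_mul, zero_mul,
        add_zero]
      fin_cases i
      · simp only [Fin.zero_eta]; linear_combination -h2.2
      · simp only [Fin.mk_one]; linear_combination -h1.2)
    exact one_ne_zero h3.1
  · intro hdet s t hst
    have e0 : s * u 0 0 + t * u 1 0 = 0 := by
      have := congrFun hst 0
      simpa using this
    have e1 : s * u 0 1 + t * u 1 1 = 0 := by
      have := congrFun hst 1
      simpa using this
    constructor
    · have : s * det2 (u 0) (u 1) = 0 := by unfold det2; linear_combination u 1 1 * e0 - u 1 0 * e1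
      exact (mul_eq_zero.mp this).resolve_right hdet
    · have : t * det2 (u 0) (u 1) = 0 := by unfold det2; linear_combination u 0 0 * e1 - u 0 1 * e0
      exact (mul_eq_zero.mp this).resolve_right hdet

theorem det2_vecMul (u v : Fin 2 → ℤ) (A : Matrix (Fin 2) (Fin 2) ℤ) :
    det2 (Matrix.vecMul u A) (Matrix.vecMul v A) = det2 u v * A.det := by
  simp [det2, Matrix.vecMul, dotProduct, Fin.sum_univ_two, Matrix.det_fin_two]
  ring

theorem ip_mulVec (u : Fin 2 → ℤ) (A : Matrix (Fin 2) (Fin 2) ℤ) (b v : Fin 2 → ℤ) :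
    ip u (A.mulVec v + b) = ip (Matrix.vecMul u A) v + ip u b := by
  simp [ip, Matrix.mulVec, Matrix.vecMul, dotProduct, Fin.sum_univ_two]
  ring

theorem width_map (A : Matrix (Fin 2) (Fin 2) ℤ) (b : Fin 2 → ℤ) (u p1 p2 p3 p4 : Fin 2 → ℤ) :
    widthIn u (msetHull ({A.mulVec p1 + b, A.mulVec p2 + b, A.mulVec p3 + b, A.mulVec p4 + b} :
        Multiset (Fin 2 → ℤ)))
      = widthIn (Matrix.vecMul u A) (msetHull ({p1, p2, p3, p4} : Multiset (Fin 2 → ℤ))) := by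
  rw [widthIn_four, widthIn_four]
  norm_cast
  simp only [ip_mulVec]
  rw [max_add_add_right, max_add_add_right, max_add_add_right,
    min_add_add_right, min_add_add_right, min_add_add_right]
  ring

theorem mw_map (A : Matrix (Fin 2) (Fin 2) ℤ) (hA : IsUnit A.det) (b : Fin 2 → ℤ)
    (p1 p2 p3 p4 : Fin 2 → ℤ) (w : Fin 2 → ℝ)
    (h : IsMultiWidth (msetHull ({p1, p2, p3, p4} : Multiset (Fin 2 → ℤ))) w) :
    IsMultiWidth (msetHull ({A.mulVec p1 + b, A.mulVec p2 + b, A.mulVec p3 + b, A.mulVec p4 + b} :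
      Multiset (Fin 2 → ℤ))) w := by
  letI := A.invertibleOfIsUnitDet hA
  have hBA : (⅟A) * A = 1 := invOf_mul_self A
  have hdetB : (⅟A).det * A.det = 1 := by rw [← Matrix.det_mul, hBA, Matrix.det_one]
  have hBne : (⅟A).det ≠ 0 := fun h0 => by rw [h0, zero_mul] at hdetB; exact zero_ne_one hdetB
  have hAne : A.det ≠ 0 := fun h0 => by rw [h0, mul_zero] at hdetB; exact zero_ne_one hdetB
  constructor
  · obtain ⟨u, hLI, hw⟩ := h.1
    refine ⟨fun i => Matrix.vecMul (u i) (⅟A), ?_, ?_⟩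
    · rw [li_iff]
      rw [det2_vecMul]
      exact mul_ne_zero ((li_iff u).mp hLI) hBne
    · intro i
      rw [width_map]
      rw [Matrix.vecMul_vecMul, hBA, Matrix.vecMul_one]
      exact hw i
  · rintro w' ⟨u, hLI, hw⟩
    apply h.2
    refine ⟨fun i => Matrix.vecMul (u i) A, ?_, ?_⟩
    · rw [li_iff, det2_vecMul]
      exact mul_ne_zero ((li_iff u).mp hLI) hAne
    · intro i
      rw [← width_map]
      exact hw i

theorem msetEquiv_trans {d : ℕ} {S T R : Multiset (Fin d → ℤ)} (h1 : MsetEquiv S T)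
    (h2 : MsetEquiv T R) : MsetEquiv S R := by
  obtain ⟨A1, hA1, b1, rfl⟩ := h1
  obtain ⟨A2, hA2, b2, rfl⟩ := h2
  refine ⟨A2 * A1, by rw [Matrix.det_mul]; exact hA2.mul hA1, A2.mulVec b1 + b2, ?_⟩
  rw [Multiset.map_map]
  congr 1
  funext v
  simp [Function.comp, Matrix.mulVec_add, ← Matrix.mulVec_mulVec, add_assoc]

theorem width_C (u : Fin 2 → ℤ) (y0 w2 w1 y1 : ℤ) :
    widthIn u (msetHull ({![0, 0], ![0, y0], ![0, w2], ![w1, y1]} : Multiset (Fin 2 → ℤ)))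
      = ((max (max 0 (u 1 * y0)) (max (u 1 * w2) (u 0 * w1 + u 1 * y1))
          - min (min 0 (u 1 * y0)) (min (u 1 * w2) (u 0 * w1 + u 1 * y1)) : ℤ) : ℝ) := by
  rw [widthIn_four]
  norm_cast
  simp only [ip, Matrix.cons_val_zero, Matrix.cons_val_one, Matrix.head_cons, mul_zero, zero_add,
    add_zero, zero_mul]

theorem spread_ge (b h x y : ℤ) (hb : b ≠ 0) (hh : 0 ≤ h) :
    h ≤ max (max 0 x) (max (b * h) y) - min (min 0 x) (min (b * h) y) := by
  rcases lt_or_gt_of_ne hb with hb1 | hb1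
  · have h2 : b * h ≤ -h := by nlinarith
    have A : (0:ℤ) ≤ max (max 0 x) (max (b * h) y) := le_max_of_le_left (le_max_left _ _)
    have B : min (min 0 x) (min (b * h) y) ≤ b * h := min_le_of_right_le (min_le_left _ _)
    linarith
  · have h2 : h ≤ b * h := le_mul_of_one_le_left hh hb1
    have A : b * h ≤ max (max 0 x) (max (b * h) y) := le_max_of_le_right (le_max_left _ _)
    have B : min (min 0 x) (min (b * h) y) ≤ 0 := min_le_of_left_le (min_le_left _ _)
    linarith

theorem part2 (w1 w2 : ℤ) (h0 : 0 < w1) (h12 : w1 < w2) :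
    ∀ y0 y1 : ℤ, 0 ≤ y0 → 2 * y0 ≤ w2 → 0 ≤ y1 → y1 < w1 →
        IsMultiWidth
          (msetHull ({![0, 0], ![0, y0], ![0, w2], ![w1, y1]} : Multiset (Fin 2 → ℤ)))
          ![(w1 : ℝ), (w2 : ℝ)] ∧
        ∀ a b : ℤ, b ≠ 0 →
          (w2 : ℝ) ≤ widthIn ![a, b]
            (msetHull ({![0, 0], ![0, y0], ![0, w2], ![w1, y1]} :
              Multiset (Fin 2 → ℤ))) := by
  intro y0 y1 hy0 hy0' hy1 hy1'
  have key : ∀ u : Fin 2 → ℤ, u 1 ≠ 0 →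
      (w2 : ℝ) ≤ widthIn u (msetHull ({![0, 0], ![0, y0], ![0, w2], ![w1, y1]} :
        Multiset (Fin 2 → ℤ))) := by
    intro u hu
    rw [width_C]
    have := spread_ge (u 1) w2 (u 1 * y0) (u 0 * w1 + u 1 * y1) hu (by omega)
    exact_mod_cast this
  refine ⟨⟨?_, ?_⟩, ?_⟩
  · -- realization
    refine ⟨![![1, 0], ![0, 1]], ?_, ?_⟩
    · rw [li_iff]
      norm_num [det2]
    · have W1 : widthIn ![1, 0]
          (msetHull ({![0, 0], ![0, y0], ![0, w2], ![w1, y1]} : Multiset (Fin 2 → ℤ)))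
          = (w1 : ℝ) := by
        rw [width_C]
        simp only [Matrix.cons_val_zero, Matrix.cons_val_one, Matrix.head_cons, zero_mul, one_mul,
          mul_zero, add_zero, zero_add]
        norm_cast
        omega
      have W2 : widthIn ![0, 1]
          (msetHull ({![0, 0], ![0, y0], ![0, w2], ![w1, y1]} : Multiset (Fin 2 → ℤ)))
          = (w2 : ℝ) := by
        rw [width_C]
        simp only [Matrix.cons_val_zero, Matrix.cons_val_one, Matrix.head_cons, zero_mul, one_mul,
          mul_zero, add_zero, zero_add]
        norm_cast
        omega
      intro i
      fin_cases i
      exacts [W1, W2]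
  · -- minimality
    rintro w' ⟨u, hLI, hw⟩
    have hd := (li_iff u).mp hLI
    unfold det2 at hd
    rcases eq_or_ne (u 0 1) 0 with hb0 | hb0
    · have ha0 : u 0 0 ≠ 0 := fun h => by rw [h, hb0] at hd; simp at hd
      have hb1 : u 1 1 ≠ 0 := fun h => by rw [h, hb0] at hd; simp at hd
      have hW0 : w' 0 = ((max 0 (u 0 0 * w1) - min 0 (u 0 0 * w1) : ℤ) : ℝ) := by
        rw [← hw 0, width_C, hb0]
        norm_num
      by_cases habs : u 0 0 = 1 ∨ u 0 0 = -1
      · have hprod : max 0 (u 0 0 * w1) - min 0 (u 0 0 * w1) = w1 := by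
          rcases habs with h | h
          · rw [h, one_mul]; omega
          · rw [h, neg_one_mul]; omega
        apply lex_le_of_snd
        · simp only [Matrix.cons_val_zero]
          rw [hW0, hprod]
        · simp only [Matrix.cons_val_one, Matrix.head_cons]
          rw [← hw 1]
          exact key (u 1) hb1
      · have h2 : 2 ≤ u 0 0 ∨ u 0 0 ≤ -2 := by omega
        have hge : 2 * w1 ≤ max 0 (u 0 0 * w1) - min 0 (u 0 0 * w1) := by
          rcases h2 with h | h
          · have hx : 2 * w1 ≤ u 0 0 * w1 := by nlinarith
            have hA := le_max_right (0:ℤ) (u 0 0 * w1)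
            have hB := min_le_left (0:ℤ) (u 0 0 * w1)
            linarith
          · have hx : u 0 0 * w1 ≤ -(2 * w1) := by nlinarith
            have hA := le_max_left (0:ℤ) (u 0 0 * w1)
            have hB := min_le_right (0:ℤ) (u 0 0 * w1)
            linarith
        apply lex_le_of_fst
        simp only [Matrix.cons_val_zero]
        rw [hW0]
        have hx : (w1:ℤ) < max 0 (u 0 0 * w1) - min 0 (u 0 0 * w1) := by linarith
        exact_mod_cast hx
    · -- u 0 1 ≠ 0 : first width ≥ w2 > w1
      apply lex_le_of_fst
      simp only [Matrix.cons_val_zero]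
      rw [← hw 0]
      have := key (u 0) hb0
      have h12' : (w1 : ℝ) < (w2 : ℝ) := by exact_mod_cast h12
      linarith
  · intro a b hb
    apply key
    simp [hb]

-- multiset swap helpers
section Swaps
variable {M : Type*} (a b c d : M)
theorem msw01 : ({a, b, c, d} : Multiset M) = {b, a, c, d} := Multiset.cons_swap a b _
theorem msw12 : ({a, b, c, d} : Multiset M) = {a, c, b, d} :=
  congrArg (a ::ₘ ·) (Multiset.cons_swap b c _)
theorem msw23 : ({a, b, c, d} : Multiset M) = {a, b, d, c} :=
  congrArg (a ::ₘ ·) (congrArg (b ::ₘ ·) (Multiset.cons_swap c d _))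
theorem mrot : ({a, b, c, d} : Multiset M) = {b, c, d, a} :=
  (msw01 a b c d).trans ((msw12 b a c d).trans (msw23 b c a d))
end Swaps


theorem width_T2 (u : Fin 2 → ℤ) (w1 s q h : ℤ) :
    widthIn u (msetHull ({![w1, s], ![0, 0], ![0, q], ![0, h]} : Multiset (Fin 2 → ℤ)))
      = ((max (max (u 0 * w1 + u 1 * s) 0) (max (u 1 * q) (u 1 * h))
          - min (min (u 0 * w1 + u 1 * s) 0) (min (u 1 * q) (u 1 * h)) : ℤ) : ℝ) := by
  rw [widthIn_four]
  norm_cast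
  simp only [ip, Matrix.cons_val_zero, Matrix.cons_val_one, Matrix.head_cons, mul_zero, zero_add,
    add_zero, zero_mul]

theorem spread_ge' (b h x y : ℤ) (hb : b ≠ 0) (hh : 0 ≤ h) :
    h ≤ max (max x 0) (max y (b * h)) - min (min x 0) (min y (b * h)) := by
  rcases lt_or_gt_of_ne hb with hb1 | hb1
  · have h2 : b * h ≤ -h := by nlinarith
    have hA : (0:ℤ) ≤ max (max x 0) (max y (b * h)) := le_max_of_le_left (le_max_right _ _)
    have hB : min (min x 0) (min y (b * h)) ≤ b * h := min_le_of_right_le (min_le_right _ _)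
    linarith
  · have h2 : h ≤ b * h := le_mul_of_one_le_left hh hb1
    have hA : b * h ≤ max (max x 0) (max y (b * h)) := le_max_of_le_right (le_max_right _ _)
    have hB : min (min x 0) (min y (b * h)) ≤ 0 := min_le_of_left_le (min_le_right _ _)
    linarith

theorem aux2 (w1 w2 q h s : ℤ) (h0 : 0 < w1) (h12 : w1 < w2) (hq0 : 0 ≤ q) (hqh : q ≤ h)
    (hs0 : 0 ≤ s) (hsw : s < w1)
    (hMW : IsMultiWidth (msetHull ({![w1, s], ![0, 0], ![0, q], ![0, h]} :
      Multiset (Fin 2 → ℤ))) ![(w1 : ℝ), (w2 : ℝ)]) : h = w2 := by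
  have W10 : widthIn ![1, 0] (msetHull ({![w1, s], ![0, 0], ![0, q], ![0, h]} :
      Multiset (Fin 2 → ℤ))) = (w1 : ℝ) := by
    rw [width_T2]
    simp only [Matrix.cons_val_zero, Matrix.cons_val_one, Matrix.head_cons, zero_mul, one_mul,
      mul_zero, add_zero, zero_add]
    norm_cast
    omega
  -- step: s ≤ h
  have hsh : s ≤ h := by
    by_contra hsh
    push_neg at hsh
    have W01 : widthIn ![0, 1] (msetHull ({![w1, s], ![0, 0], ![0, q], ![0, h]} :
        Multiset (Fin 2 → ℤ))) = (s : ℝ) := by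
      rw [width_T2]
      simp only [Matrix.cons_val_zero, Matrix.cons_val_one, Matrix.head_cons, zero_mul, one_mul,
        mul_zero, add_zero, zero_add]
      norm_cast
      omega
    have htup : IsWidthTuple (msetHull ({![w1, s], ![0, 0], ![0, q], ![0, h]} :
        Multiset (Fin 2 → ℤ))) ![(s : ℝ), (w1 : ℝ)] := by
      refine ⟨![![0, 1], ![1, 0]], ?_, ?_⟩
      · rw [li_iff]; norm_num [det2]
      · intro i; fin_cases i; exacts [W01, W10]
    have := fst_le_of_lex_le _ _ (hMW.2 _ htup)
    simp only [Matrix.cons_val_zero] at this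
    have : (w1 : ℤ) ≤ s := by exact_mod_cast this
    omega
  have W01 : widthIn ![0, 1] (msetHull ({![w1, s], ![0, 0], ![0, q], ![0, h]} :
      Multiset (Fin 2 → ℤ))) = (h : ℝ) := by
    rw [width_T2]
    simp only [Matrix.cons_val_zero, Matrix.cons_val_one, Matrix.head_cons, zero_mul, one_mul,
      mul_zero, add_zero, zero_add]
    norm_cast
    omega
  have htup : IsWidthTuple (msetHull ({![w1, s], ![0, 0], ![0, q], ![0, h]} :
      Multiset (Fin 2 → ℤ))) ![(w1 : ℝ), (h : ℝ)] := by
    refine ⟨![![1, 0], ![0, 1]], ?_, ?_⟩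
    · rw [li_iff]; norm_num [det2]
    · intro i; fin_cases i; exacts [W10, W01]
  have hle := snd_le_of_lex_le _ _ (hMW.2 _ htup) (by simp)
  simp only [Matrix.cons_val_one, Matrix.head_cons, Matrix.cons_val_zero] at hle
  have hw2h : (w2 : ℤ) ≤ h := by exact_mod_cast hle
  -- converse: h ≤ w2 using the realizing tuple
  obtain ⟨u, hLI, hw⟩ := hMW.1
  have hd := (li_iff u).mp hLI
  unfold det2 at hd
  have key : ∀ i : Fin 2, u i 1 ≠ 0 → (h : ℝ) ≤ widthIn (u i)
      (msetHull ({![w1, s], ![0, 0], ![0, q], ![0, h]} : Multiset (Fin 2 → ℤ))) := by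
    intro i hi
    rw [width_T2]
    have := spread_ge' (u i 1) h (u i 0 * w1 + u i 1 * s) (u i 1 * q) hi (by omega)
    exact_mod_cast this
  rcases eq_or_ne (u 1 1) 0 with hb1 | hb1
  · have hb0 : u 0 1 ≠ 0 := fun hh0 => by rw [hb1, hh0] at hd; simp at hd
    have := key 0 hb0
    rw [hw 0] at this
    simp only [Matrix.cons_val_zero] at this
    have : (h : ℤ) ≤ w1 := by exact_mod_cast this
    omega
  · have := key 1 hb1
    rw [hw 1] at this
    simp only [Matrix.cons_val_one, Matrix.head_cons, Matrix.cons_val_zero] at this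
    have : (h : ℤ) ≤ w2 := by exact_mod_cast this
    omega

theorem aux1 (w1 w2 : ℤ) (h0 : 0 < w1) (h12 : w1 < w2) (β α1 α2 α3 : ℤ)
    (hs1 : α1 ≤ α2) (hs2 : α2 ≤ α3)
    (hMW : IsMultiWidth (msetHull ({![w1, β], ![0, α1], ![0, α2], ![0, α3]} :
      Multiset (Fin 2 → ℤ))) ![(w1 : ℝ), (w2 : ℝ)]) :
    ∃ y0 y1 : ℤ, MsetEquiv ({![w1, β], ![0, α1], ![0, α2], ![0, α3]} : Multiset (Fin 2 → ℤ))
      ({![0, 0], ![0, y0], ![0, w2], ![w1, y1]} : Multiset (Fin 2 → ℤ)) := by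
  set s : ℤ := (β - α1) % w1 with hs_def
  have hs0 : 0 ≤ s := Int.emod_nonneg _ (ne_of_gt h0)
  have hsw : s < w1 := Int.emod_lt_of_pos _ h0
  set m : ℤ := -((β - α1) / w1) with hm_def
  have hdm : w1 * ((β - α1) / w1) + (β - α1) % w1 = β - α1 := Int.mul_ediv_add_emod _ _
  set A2 : Matrix (Fin 2) (Fin 2) ℤ := ![![1, 0], ![m, 1]] with hA2_def
  have hA2det : A2.det = 1 := by
    rw [Matrix.det_fin_two, hA2_def]
    simp
  have hA2unit : IsUnit A2.det := by rw [hA2det]; exact isUnit_one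
  set b2 : Fin 2 → ℤ := ![0, -α1] with hb2_def
  have hG : ∀ v : Fin 2 → ℤ, A2.mulVec v + b2 = ![v 0, m * v 0 + v 1 - α1] := by
    intro v
    funext i
    fin_cases i <;>
      simp [hA2_def, hb2_def, Matrix.mulVec, dotProduct, Fin.sum_univ_two] <;> ring
  have hG1 : A2.mulVec ![w1, β] + b2 = ![w1, s] := by
    rw [hG]
    congr 1 <;> try rfl
    funext i
    fin_cases i
    · show m * w1 + β - α1 = s
      rw [hm_def, hs_def]
      linear_combination -hdm
  have hG2 : A2.mulVec ![0, α1] + b2 = ![0, 0] := by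
    rw [hG]; norm_num
  have hG3 : A2.mulVec ![0, α2] + b2 = ![0, α2 - α1] := by
    rw [hG]; norm_num
  have hG4 : A2.mulVec ![0, α3] + b2 = ![0, α3 - α1] := by
    rw [hG]; norm_num
  have hMW2 := mw_map A2 hA2unit b2 ![w1, β] ![0, α1] ![0, α2] ![0, α3] _ hMW
  rw [hG1, hG2, hG3, hG4] at hMW2
  have hh := aux2 w1 w2 (α2 - α1) (α3 - α1) s h0 h12 (by omega) (by omega) hs0 hsw hMW2
  refine ⟨α2 - α1, s, ?_⟩
  refine ⟨A2, hA2unit, b2, ?_⟩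
  simp only [Multiset.map_cons, Multiset.map_singleton, Multiset.insert_eq_cons]
  rw [hG1, hG2, hG3, hG4, hh]
  exact mrot ![w1, s] ![0, 0] ![0, α2 - α1] ![0, w2]

theorem part1 (w1 w2 : ℤ) (h0 : 0 < w1) (h12 : w1 < w2)
    (S : Multiset (Fin 2 → ℤ)) (hcard : Multiset.card S = 4)
    (hMW : IsMultiWidth (msetHull S) ![(w1 : ℝ), (w2 : ℝ)])
    (hLT : HasLineType w1 ({0, 0, 0, w1} : Multiset ℤ) S) :
    ∃ y0 y1 : ℤ,
      MsetEquiv S ({![0, 0], ![0, y0], ![0, w2], ![w1, y1]} : Multiset (Fin 2 → ℤ)) := by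
  obtain ⟨u, hwu, a, ha, c, hmap⟩ := hLT
  rw [Multiset.map_map] at hmap
  set r : Fin 2 → ℤ := ![a * u 0, a * u 1] with hr_def
  have hfun : (fun v : Fin 2 → ℤ => a * (∑ i, u i * v i) + c) = fun v => ip r v + c := by
    funext v
    simp [ip, hr_def, Fin.sum_univ_two]
    ring
  rw [show ((fun x => a * x + c) ∘ fun v : Fin 2 → ℤ => ∑ i, u i * v i)
      = fun v => ip r v + c from hfun ▸ rfl] at hmap
  -- extract the special point p
  have hw1mem : w1 ∈ S.map (fun v => ip r v + c) := by rw [hmap]; simp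
  obtain ⟨p, hpS, hp⟩ := Multiset.mem_map.mp hw1mem
  have hS : S = p ::ₘ S.erase p := (Multiset.cons_erase hpS).symm
  have hperm : ({0, 0, 0, w1} : Multiset ℤ) = w1 ::ₘ ({0, 0, 0} : Multiset ℤ) := by
    show (0 ::ₘ 0 ::ₘ 0 ::ₘ w1 ::ₘ 0) = w1 ::ₘ 0 ::ₘ 0 ::ₘ 0 ::ₘ 0
    rw [Multiset.cons_swap 0 w1, Multiset.cons_swap 0 w1, Multiset.cons_swap 0 w1]
  rw [hS, Multiset.map_cons, hp, hperm] at hmap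
  have hrest : (S.erase p).map (fun v => ip r v + c) = ({0, 0, 0} : Multiset ℤ) :=
    (Multiset.cons_inj_right w1).mp hmap
  have hcard3 : Multiset.card (S.erase p) = 3 := by
    have := congrArg Multiset.card hrest
    simpa using this
  obtain ⟨q1, q2, q3, hq⟩ := Multiset.card_eq_three.mp hcard3
  have hqval : ∀ x ∈ ({q1, q2, q3} : Multiset (Fin 2 → ℤ)), ip r x + c = 0 := by
    intro x hx
    have : ip r x + c ∈ ({0, 0, 0} : Multiset ℤ) := by
      rw [← hrest, hq]
      exact Multiset.mem_map_of_mem _ hx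
    simpa using this
  have hq1 : ip r q1 + c = 0 := hqval q1 (by simp)
  have hq2 : ip r q2 + c = 0 := hqval q2 (by simp)
  have hq3 : ip r q3 + c = 0 := hqval q3 (by simp)
  have hSlit : S = ({p, q1, q2, q3} : Multiset (Fin 2 → ℤ)) := by rw [hS, hq]; rfl
  rw [hSlit] at hMW
  -- r is nonzero
  have hrne : ¬(r 0 = 0 ∧ r 1 = 0) := by
    rintro ⟨h1, h2⟩
    have hh1 : ip r p = 0 := by simp [ip, h1, h2]
    have hh2 : ip r q1 = 0 := by simp [ip, h1, h2]
    omega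
  -- primitivity of r
  set d : ℤ := (Int.gcd (r 0) (r 1) : ℤ) with hd_def
  have hdpos : 0 < d := by
    rw [hd_def]
    have : Int.gcd (r 0) (r 1) ≠ 0 := fun hg => hrne (Int.gcd_eq_zero_iff.mp hg)
    positivity
  obtain ⟨r0', hr0⟩ : d ∣ r 0 := Int.gcd_dvd_left _ _
  obtain ⟨r1', hr1⟩ : d ∣ r 1 := Int.gcd_dvd_right _ _
  set u'' : Fin 2 → ℤ := ![r0', r1'] with hu''_def
  have hipd : ∀ v, ip r v = d * ip u'' v := by
    intro v
    simp [ip, hu''_def, hr0, hr1]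
    ring
  set e : ℤ := ip u'' q1 with he_def
  set w1' : ℤ := ip u'' p - e with hw1'_def
  have hdw1 : d * w1' = w1 := by
    rw [hw1'_def, he_def]
    have h1 := hipd p
    have h2 := hipd q1
    linear_combination hp - hq1 - h1 + h2
  have hw1'pos : 0 < w1' := by nlinarith
  have heq1 : ip u'' q2 = e := by
    have h1 := hipd q1; have h2 := hipd q2
    have : d * ip u'' q2 = d * e := by rw [he_def]; omega
    exact mul_left_cancel₀ (ne_of_gt hdpos) this
  have heq2 : ip u'' q3 = e := by
    have h1 := hipd q1; have h2 := hipd q3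
    have : d * ip u'' q3 = d * e := by rw [he_def]; omega
    exact mul_left_cancel₀ (ne_of_gt hdpos) this
  have hipp : ip u'' p = e + w1' := by omega
  have Wu'' : widthIn u'' (msetHull ({p, q1, q2, q3} : Multiset (Fin 2 → ℤ)))
      = ((w1' : ℤ) : ℝ) := by
    rw [widthIn_four, hipp, ← he_def, heq1, heq2]
    norm_cast
    omega
  have hd1 : d = 1 := by
    by_contra hd1
    have hd2 : 2 ≤ d := by omega
    set v'' : Fin 2 → ℤ := ![-r1', r0'] with hv''_def
    have hu''ne : ¬(r0' = 0 ∧ r1' = 0) := by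
      rintro ⟨h1, h2⟩
      rw [h1] at hr0
      rw [h2] at hr1
      simp at hr0 hr1
      exact hrne ⟨hr0, hr1⟩
    have hdet : det2 u'' v'' ≠ 0 := by
      simp only [det2, hu''_def, hv''_def, Matrix.cons_val_zero, Matrix.cons_val_one,
        Matrix.head_cons]
      intro hc
      have hc' : r0' * r0' + r1' * r1' = 0 := by linear_combination hc
      have h00 := (add_eq_zero_iff_of_nonneg (mul_self_nonneg r0') (mul_self_nonneg r1')).mp hc'
      exact hu''ne ⟨mul_self_eq_zero.mp h00.1, mul_self_eq_zero.mp h00.2⟩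
    have htup : IsWidthTuple (msetHull ({p, q1, q2, q3} : Multiset (Fin 2 → ℤ)))
        ![((w1' : ℤ) : ℝ), widthIn v'' (msetHull ({p, q1, q2, q3} : Multiset (Fin 2 → ℤ)))] := by
      refine ⟨![u'', v''], ?_, ?_⟩
      · rw [li_iff]
        simpa using hdet
      · intro i; fin_cases i; exacts [Wu'', rfl]
    have hle := fst_le_of_lex_le _ _ (hMW.2 _ htup)
    simp only [Matrix.cons_val_zero] at hle
    have : (w1 : ℤ) ≤ w1' := by exact_mod_cast hle
    nlinarith
  rw [hd1, one_mul] at hdw1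
  -- now gcd (r 0) (r 1) = 1; Bezout
  have hgcd1 : (Int.gcd (r 0) (r 1) : ℤ) = 1 := by rw [← hd_def, hd1]
  have hbez : r 0 * Int.gcdA (r 0) (r 1) + r 1 * Int.gcdB (r 0) (r 1) = 1 := by
    have hab := Int.gcd_eq_gcd_ab (r 0) (r 1)
    linarith
  set x : ℤ := Int.gcdA (r 0) (r 1) with hx_def
  set y : ℤ := Int.gcdB (r 0) (r 1) with hy_def
  set A : Matrix (Fin 2) (Fin 2) ℤ := ![![r 0, r 1], ![-y, x]] with hA_def
  have hAdet : A.det = 1 := by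
    rw [Matrix.det_fin_two, hA_def]
    simp only [Matrix.cons_val_zero, Matrix.cons_val_one, Matrix.head_cons, Matrix.head_fin_const]
    ring_nf
    linarith [hbez]
  have hAunit : IsUnit A.det := by rw [hAdet]; exact isUnit_one
  set bb : Fin 2 → ℤ := ![c, 0] with hbb_def
  have hF : ∀ v : Fin 2 → ℤ, A.mulVec v + bb = ![ip r v + c, -y * v 0 + x * v 1] := by
    intro v
    funext i
    fin_cases i <;>
      simp [hA_def, hbb_def, ip, Matrix.mulVec, dotProduct, Fin.sum_univ_two]
  set β : ℤ := -y * p 0 + x * p 1 with hβ_def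
  set α1 : ℤ := -y * q1 0 + x * q1 1 with hα1_def
  set α2 : ℤ := -y * q2 0 + x * q2 1 with hα2_def
  set α3 : ℤ := -y * q3 0 + x * q3 1 with hα3_def
  have hFp : A.mulVec p + bb = ![w1, β] := by rw [hF, hp]
  have hFq1 : A.mulVec q1 + bb = ![0, α1] := by rw [hF, hq1]
  have hFq2 : A.mulVec q2 + bb = ![0, α2] := by rw [hF, hq2]
  have hFq3 : A.mulVec q3 + bb = ![0, α3] := by rw [hF, hq3]
  have hMW3 := mw_map A hAunit bb p q1 q2 q3 _ hMW
  rw [hFp, hFq1, hFq2, hFq3] at hMW3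
  have hME : MsetEquiv S ({![w1, β], ![0, α1], ![0, α2], ![0, α3]} : Multiset (Fin 2 → ℤ)) := by
    refine ⟨A, hAunit, bb, ?_⟩
    rw [hSlit]
    simp only [Multiset.insert_eq_cons, Multiset.map_cons, Multiset.map_singleton]
    rw [hFp, hFq1, hFq2, hFq3]
  clear hfun hmap hw1mem hrest hqval hS hq hSlit hwu hMW
  rcases le_total α1 α2 with h12a | h12a
  · rcases le_total α2 α3 with h23a | h23a
    · obtain ⟨y0, y1, hE⟩ := aux1 w1 w2 h0 h12 β α1 α2 α3 h12a h23a hMW3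
      exact ⟨y0, y1, msetEquiv_trans hME hE⟩
    · rcases le_total α1 α3 with h13a | h13a
      · have hperm := msw23 ![w1, β] ![0, α1] ![0, α2] ![0, α3]
        rw [hperm] at hMW3 hME
        obtain ⟨y0, y1, hE⟩ := aux1 w1 w2 h0 h12 β α1 α3 α2 h13a h23a hMW3
        exact ⟨y0, y1, msetEquiv_trans hME hE⟩
      · have hperm := (msw23 ![w1, β] ![0, α1] ![0, α2] ![0, α3]).trans
          (msw12 ![w1, β] ![0, α1] ![0, α3] ![0, α2])
        rw [hperm] at hMW3 hME
        obtain ⟨y0, y1, hE⟩ := aux1 w1 w2 h0 h12 β α3 α1 α2 h13a h12a hMW3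
        exact ⟨y0, y1, msetEquiv_trans hME hE⟩
  · rcases le_total α1 α3 with h13a | h13a
    · have hperm := msw12 ![w1, β] ![0, α1] ![0, α2] ![0, α3]
      rw [hperm] at hMW3 hME
      obtain ⟨y0, y1, hE⟩ := aux1 w1 w2 h0 h12 β α2 α1 α3 h12a h13a hMW3
      exact ⟨y0, y1, msetEquiv_trans hME hE⟩
    · rcases le_total α2 α3 with h23a | h23a
      · have hperm := (msw12 ![w1, β] ![0, α1] ![0, α2] ![0, α3]).trans
          (msw23 ![w1, β] ![0, α2] ![0, α1] ![0, α3])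
        rw [hperm] at hMW3 hME
        obtain ⟨y0, y1, hE⟩ := aux1 w1 w2 h0 h12 β α2 α3 α1 h23a h13a hMW3
        exact ⟨y0, y1, msetEquiv_trans hME hE⟩
      · have hperm := ((msw23 ![w1, β] ![0, α1] ![0, α2] ![0, α3]).trans
          (msw12 ![w1, β] ![0, α1] ![0, α3] ![0, α2])).trans
          (msw23 ![w1, β] ![0, α3] ![0, α1] ![0, α2])
        rw [hperm] at hMW3 hME
        obtain ⟨y0, y1, hE⟩ := aux1 w1 w2 h0 h12 β α3 α2 α1 h23a h12a hMW3
        exact ⟨y0, y1, msetEquiv_trans hME hE⟩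

/-- Every four-point multiset in `ℤ²` of multi-width `(w₁, w₂)` (`0 < w₁ < w₂`)
admitting a dual vector `u₁` of width `w₁` with `u₁·S ∼ {0,0,0,w₁}` is affine
equivalent to some `{(0,0), (0,y₀), (0,w₂), (w₁,y₁)}`; moreover every such listed
multiset with `0 ≤ y₀ ≤ w₂/2` and `0 ≤ y₁ < w₁` has multi-width exactly `(w₁, w₂)`,
and in particular has width at least `w₂` in every direction `(a, b)` with `b ≠ 0`. -/
theorem four_point_sets_type0001_form (w1 w2 : ℤ) (h0 : 0 < w1) (h12 : w1 < w2) :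
    (∀ S : Multiset (Fin 2 → ℤ), Multiset.card S = 4 →
        IsMultiWidth (msetHull S) ![(w1 : ℝ), (w2 : ℝ)] →
        HasLineType w1 ({0, 0, 0, w1} : Multiset ℤ) S →
        ∃ y0 y1 : ℤ,
          MsetEquiv S ({![0, 0], ![0, y0], ![0, w2], ![w1, y1]} : Multiset (Fin 2 → ℤ))) ∧
    (∀ y0 y1 : ℤ, 0 ≤ y0 → 2 * y0 ≤ w2 → 0 ≤ y1 → y1 < w1 →
        IsMultiWidth
          (msetHull ({![0, 0], ![0, y0], ![0, w2], ![w1, y1]} : Multiset (Fin 2 → ℤ)))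
          ![(w1 : ℝ), (w2 : ℝ)] ∧
        ∀ a b : ℤ, b ≠ 0 →
          (w2 : ℝ) ≤ widthIn ![a, b]
            (msetHull ({![0, 0], ![0, y0], ![0, w2], ![w1, y1]} :
              Multiset (Fin 2 → ℤ)))) := by
  refine ⟨?_, ?_⟩
  · intro S hcard hMW hLT
    exact part1 w1 w2 h0 h12 S hcard hMW hLT
  · intro y0 y1 hy0 hy0' hy1 hy1'
    exact part2 w1 w2 h0 h12 y0 y1 hy0 hy0' hy1 hy1'
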